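/- arXiv:2508.20054 — 4 statements merged into one kernel-verified Lean document; each statement's English description precedes it below -/
import Mathlib

section
/- Every restriction category (a gs-monoidal category in which every arrow is copyable, i.e. f ; ∇_Y = ∇_X ; (f ⊗ f) for all f : X → Y) is a domain category: for every arrow f : X → Y, dom(f) ; f = f, where dom(f) = ∇_X ; (id_X ⊗ (f ; !_Y)) ; ρ⁻¹_X... i.e. ∇_X ; (id_X ⊗ f) ; (id_X ⊗ !_Y) ; ρ⁻¹_X ; f = f. -/
open CategoryTheory MonoidalCategory

universe v₁ v₂ u₁ u₂

/-- A gs-monoidal category: a symmetric monoidal category equipped with a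
multiplicative cocommutative comonoid structure (duplicator, discharger) on each object. -/
class GSMonoidal (C : Type u₁) [Category.{v₁} C] [MonoidalCategory C] [SymmetricCategory C] where
  /-- duplicator ∇_X : X ⟶ X ⊗ X -/
  dup : ∀ X : C, X ⟶ X ⊗ X
  /-- discharger !_X : X ⟶ I -/
  del : ∀ X : C, X ⟶ 𝟙_ C
  dup_coassoc : ∀ X : C, dup X ≫ (dup X ▷ X) ≫ (α_ X X X).hom = dup X ≫ (X ◁ dup X)
  dup_cocomm : ∀ X : C, dup X ≫ (β_ X X).hom = dup X
  dup_del_right : ∀ X : C, dup X ≫ (X ◁ del X) ≫ (ρ_ X).hom = 𝟙 X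
  dup_del_left : ∀ X : C, dup X ≫ (del X ▷ X) ≫ (λ_ X).hom = 𝟙 X
  dup_unit : dup (𝟙_ C) = (ρ_ (𝟙_ C)).inv
  del_unit : del (𝟙_ C) = 𝟙 (𝟙_ C)
  dup_tensor : ∀ X Y : C, dup (X ⊗ Y) = (dup X ⊗ₘ dup Y) ≫ tensorμ X X Y Y
  del_tensor : ∀ X Y : C, del (X ⊗ Y) = (del X ⊗ₘ del Y) ≫ (λ_ (𝟙_ C)).hom

/-- The domain of an arrow in a gs-monoidal category: dom(f) = ∇_X ; (id_X ⊗ (f ; !_Y)) ; ρ⁻¹_X. -/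
def gsDom {C : Type u₁} [Category.{v₁} C] [MonoidalCategory C] [SymmetricCategory C]
    [GSMonoidal C] {X Y : C} (f : X ⟶ Y) : X ⟶ X :=
  GSMonoidal.dup X ≫ (X ◁ (f ≫ GSMonoidal.del Y)) ≫ (ρ_ X).hom

theorem restriction_is_domain_category {C : Type u₁} [Category.{v₁} C] [MonoidalCategory C]
    [SymmetricCategory C] [GSMonoidal C]
    (hcopy : ∀ {X Y : C} (f : X ⟶ Y), f ≫ GSMonoidal.dup Y = GSMonoidal.dup X ≫ (f ⊗ₘ f))
    {X Y : C} (f : X ⟶ Y) :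
    gsDom f ≫ f = f := by
  unfold gsDom
  calc (GSMonoidal.dup X ≫ (X ◁ (f ≫ GSMonoidal.del Y)) ≫ (ρ_ X).hom) ≫ f
      = GSMonoidal.dup X ≫ (f ⊗ₘ (f ≫ GSMonoidal.del Y)) ≫ (ρ_ Y).hom := by
        rw [Category.assoc, Category.assoc, ← MonoidalCategory.rightUnitor_naturality,
          ← Category.assoc (X ◁ (f ≫ GSMonoidal.del Y)), ← tensorHom_def']
    _ = (GSMonoidal.dup X ≫ (f ⊗ₘ f)) ≫ (𝟙 Y ⊗ₘ GSMonoidal.del Y) ≫ (ρ_ Y).hom := by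
        have h : f ⊗ₘ (f ≫ GSMonoidal.del Y) = (f ⊗ₘ f) ≫ (𝟙 Y ⊗ₘ GSMonoidal.del Y) := by
          rw [MonoidalCategory.tensorHom_comp_tensorHom, Category.comp_id]
        rw [h]; simp only [Category.assoc]
    _ = f := by
        rw [← hcopy, Category.assoc, MonoidalCategory.id_tensorHom,
          GSMonoidal.dup_del_right, Category.comp_id]
end

section
/- In a domain category C, for every arrow f : X → Y the following hold: (1) dom(f ; ∇_Y) = dom(f); (2) dom(∇_X ; (f ⊗ f)) = dom(f); (3) dom(f ; !_Y) = dom(f). -/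
open CategoryTheory MonoidalCategory

universe v₁ v₂ u₁ u₂

section Aux

variable {C : Type u₁} [Category.{v₁} C] [MonoidalCategory C] [SymmetricCategory C] [GSMonoidal C]

open GSMonoidal

/-- gsDom only depends on f ≫ del. -/
lemma gsDom_congr {X Y Z : C} (f : X ⟶ Y) (g : X ⟶ Z)
    (h : f ≫ del Y = g ≫ del Z) : gsDom f = gsDom g := by
  simp only [gsDom, h]

lemma dup_delWhisker (Y : C) : dup Y ≫ del Y ▷ Y = (λ_ Y).inv :=
  (Iso.comp_hom_eq_id (λ_ Y)).mp (by rw [Category.assoc]; exact dup_del_left Y)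

lemma dup_del (Y : C) : dup Y ≫ del (Y ⊗ Y) = del Y := by
  rw [del_tensor, MonoidalCategory.tensorHom_def, Category.assoc, ← Category.assoc (dup Y), dup_delWhisker,
    MonoidalCategory.leftUnitor_naturality, Iso.inv_hom_id_assoc]

lemma gsDom_alt {X Y : C} (f : X ⟶ Y) :
    gsDom f = dup X ≫ (f ≫ del Y) ▷ X ≫ (λ_ X).hom := by
  rw [gsDom, ← braiding_leftUnitor X,
    BraidedCategory.braiding_naturality_right_assoc, ← Category.assoc, dup_cocomm]

end Aux

theorem dom_structural_invariance {C : Type u₁} [Category.{v₁} C] [MonoidalCategory C]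
    [SymmetricCategory C] [GSMonoidal C]
    (hdom : ∀ {X Y : C} (f : X ⟶ Y), gsDom f ≫ f = f)
    {X Y : C} (f : X ⟶ Y) :
    gsDom (f ≫ GSMonoidal.dup Y) = gsDom f ∧
      gsDom (GSMonoidal.dup X ≫ (f ⊗ₘ f)) = gsDom f ∧
      gsDom (f ≫ GSMonoidal.del Y) = gsDom f := by
  open GSMonoidal in
  refine ⟨?_, ?_, ?_⟩
  · exact gsDom_congr _ f (by rw [Category.assoc, dup_del])
  · refine gsDom_congr _ f ?_
    calc (dup X ≫ (f ⊗ₘ f)) ≫ del (Y ⊗ Y)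
        = dup X ≫ (f ⊗ₘ f) ≫ (del Y ⊗ₘ del Y) ≫ (λ_ (𝟙_ C)).hom := by
          rw [del_tensor]; simp only [Category.assoc]
      _ = dup X ≫ ((f ≫ del Y) ⊗ₘ (f ≫ del Y)) ≫ (λ_ (𝟙_ C)).hom := by
          rw [tensorHom_comp_tensorHom_assoc]
      _ = dup X ≫ (f ≫ del Y) ▷ X ≫ 𝟙_ C ◁ (f ≫ del Y) ≫ (λ_ (𝟙_ C)).hom := by
          rw [MonoidalCategory.tensorHom_def]; simp only [Category.assoc]
      _ = (dup X ≫ (f ≫ del Y) ▷ X ≫ (λ_ X).hom) ≫ (f ≫ del Y) := by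
          rw [MonoidalCategory.leftUnitor_naturality]; simp only [Category.assoc]
      _ = gsDom f ≫ f ≫ del Y := by rw [← gsDom_alt]
      _ = f ≫ del Y := by rw [← Category.assoc, hdom]
  · exact gsDom_congr _ f (by rw [Category.assoc, del_unit, Category.comp_id])
end

section
/- Let F : C → D be a lax symmetric monoidal functor between gs-monoidal categories. If F is domain preserving, then F is mass preserving: for all objects X, ∇_{F(X)} ; ψ_{X,X} ; F(!_X ⊗ !_X) = F(!_X) ; F(ρ⁻¹_I), where ρ⁻¹_I : I → I ⊗ I. -/
open CategoryTheory MonoidalCategory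

universe v₁ v₂ u₁ u₂

open Functor.LaxMonoidal in
theorem domain_preserving_implies_mass_preserving {C : Type u₁} [Category.{v₁} C] [MonoidalCategory C] [SymmetricCategory C] [GSMonoidal C]
    {D : Type u₂} [Category.{v₂} D] [MonoidalCategory D] [SymmetricCategory D] [GSMonoidal D]
    (F : C ⥤ D) [F.LaxBraided]
    (hdom : ∀ X : C, GSMonoidal.dup (F.obj X) ≫ μ F X X ≫ F.map (X ◁ GSMonoidal.del X) =
      F.map (ρ_ X).inv)
    (X : C) :
    GSMonoidal.dup (F.obj X) ≫ μ F X X ≫ F.map (GSMonoidal.del X ⊗ₘ GSMonoidal.del X) =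
      F.map (GSMonoidal.del X) ≫ F.map (ρ_ (𝟙_ C)).inv := by
  have h : (GSMonoidal.del X ⊗ₘ GSMonoidal.del X : X ⊗ X ⟶ _) =
      (X ◁ GSMonoidal.del X) ≫ (GSMonoidal.del X ▷ 𝟙_ C) := by
    rw [tensorHom_def']
  rw [h, F.map_comp]
  slice_lhs 1 3 => rw [hdom X]
  rw [← F.map_comp, ← F.map_comp]
  congr 1
  rw [← rightUnitor_inv_naturality]
end

section
/- Let F : C → D be a lax symmetric monoidal functor between gs-monoidal categories where D is a restriction category (every arrow g in D satisfies g ; ∇ = ∇ ; (g ⊗ g)). Then F is mass preserving if and only if F is unital domain preserving. -/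
open CategoryTheory MonoidalCategory

universe v₁ v₂ u₁ u₂

open Functor.LaxMonoidal in
theorem mass_preserving_iff_unital_domain_preserving {C : Type u₁} [Category.{v₁} C] [MonoidalCategory C] [SymmetricCategory C] [GSMonoidal C]
    {D : Type u₂} [Category.{v₂} D] [MonoidalCategory D] [SymmetricCategory D] [GSMonoidal D]
    (F : C ⥤ D) [F.LaxBraided]
    (hrestr : ∀ {A B : D} (g : A ⟶ B), g ≫ GSMonoidal.dup B = GSMonoidal.dup A ≫ (g ⊗ₘ g)) :
    (∀ X : C,
        GSMonoidal.dup (F.obj X) ≫ μ F X X ≫ F.map (GSMonoidal.del X ⊗ₘ GSMonoidal.del X) =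
          F.map (GSMonoidal.del X) ≫ F.map (ρ_ (𝟙_ C)).inv) ↔
      GSMonoidal.dup (F.obj (𝟙_ C)) ≫ μ F (𝟙_ C) (𝟙_ C) = F.map (ρ_ (𝟙_ C)).inv := by
  constructor
  · intro h
    have := h (𝟙_ C)
    simpa [GSMonoidal.del_unit] using this
  · intro h X
    have hnat : (F.map (GSMonoidal.del X) ⊗ₘ F.map (GSMonoidal.del X)) ≫ μ F (𝟙_ C) (𝟙_ C)
        = μ F X X ≫ F.map (GSMonoidal.del X ⊗ₘ GSMonoidal.del X) :=
      Functor.LaxMonoidal.μ_natural F _ _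
    calc GSMonoidal.dup (F.obj X) ≫ μ F X X ≫ F.map (GSMonoidal.del X ⊗ₘ GSMonoidal.del X)
        = GSMonoidal.dup (F.obj X) ≫ (F.map (GSMonoidal.del X) ⊗ₘ F.map (GSMonoidal.del X)) ≫
            μ F (𝟙_ C) (𝟙_ C) := by rw [hnat]
      _ = F.map (GSMonoidal.del X) ≫ GSMonoidal.dup (F.obj (𝟙_ C)) ≫ μ F (𝟙_ C) (𝟙_ C) := by
            rw [← Category.assoc, ← hrestr, Category.assoc]
      _ = F.map (GSMonoidal.del X) ≫ F.map (ρ_ (𝟙_ C)).inv := by rw [h]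
end
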